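/- Let v be a polynomial on ℝ^n. The solution u of the Dirichlet problem Δu = v in the open unit ball with u = 0 on the unit sphere is a polynomial of degree at most deg v + 2. -/

import Mathlib

open MvPolynomial Metric Finset

/-- The Laplacian of a function on `ℝⁿ`: `Δf(x) = Σᵢ ∂²f/∂xᵢ²(x)`. -/
noncomputable def laplacian {n : ℕ} (f : EuclideanSpace ℝ (Fin n) → ℝ)
    (x : EuclideanSpace ℝ (Fin n)) : ℝ :=
  ∑ i : Fin n,
    fderiv ℝ (fun y => fderiv ℝ f y (EuclideanSpace.single i 1)) x (EuclideanSpace.single i 1)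

variable {n : ℕ}

noncomputable def evalF (Q : MvPolynomial (Fin n) ℝ) (x : EuclideanSpace ℝ (Fin n)) : ℝ :=
  MvPolynomial.eval (fun i => x i) Q

noncomputable def lapP (Q : MvPolynomial (Fin n) ℝ) : MvPolynomial (Fin n) ℝ :=
  ∑ i : Fin n, pderiv i (pderiv i Q)

noncomputable def rsq (n : ℕ) : MvPolynomial (Fin n) ℝ := ∑ i : Fin n, X i ^ 2

lemma contDiff_evalF (Q : MvPolynomial (Fin n) ℝ) {N : ℕ∞} : ContDiff ℝ N (evalF Q) := by
  induction Q using MvPolynomial.induction_on with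
  | C a =>
      have : evalF (C a : MvPolynomial (Fin n) ℝ) = fun _ => a := by funext x; simp [evalF]
      rw [this]; exact contDiff_const
  | add p q hp hq =>
      have : evalF (p + q) = fun x => evalF p x + evalF q x := by funext x; simp [evalF]
      rw [this]; exact hp.add hq
  | mul_X p j hp =>
      have : evalF (p * X j) = fun x => evalF p x * (EuclideanSpace.proj (𝕜 := ℝ) j) x := by
        funext x; simp [evalF]
      rw [this]; exact hp.mul (ContinuousLinearMap.contDiff (EuclideanSpace.proj (𝕜 := ℝ) j))

lemma hasFDerivAt_evalF (Q : MvPolynomial (Fin n) ℝ) (x : EuclideanSpace ℝ (Fin n)) :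
    HasFDerivAt (evalF Q)
      (∑ i : Fin n, evalF (pderiv i Q) x • (EuclideanSpace.proj i : _ →L[ℝ] ℝ)) x := by
  induction Q using MvPolynomial.induction_on with
  | C a =>
      have e1 : evalF (C a : MvPolynomial (Fin n) ℝ) = fun _ => a := by funext y; simp [evalF]
      have e2 : (∑ i : Fin n, evalF (pderiv i (C a : MvPolynomial (Fin n) ℝ)) x
          • (EuclideanSpace.proj i : _ →L[ℝ] ℝ)) = 0 := by
        simp [evalF]
      rw [e1, e2]; exact hasFDerivAt_const a x
  | add p q hp hq =>
      have e1 : evalF (p + q) = fun y => evalF p y + evalF q y := by funext y; simp [evalF]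
      have e2 : (∑ i : Fin n, evalF (pderiv i (p + q)) x
            • (EuclideanSpace.proj i : _ →L[ℝ] ℝ))
          = (∑ i : Fin n, evalF (pderiv i p) x • (EuclideanSpace.proj i : _ →L[ℝ] ℝ))
            + (∑ i : Fin n, evalF (pderiv i q) x • (EuclideanSpace.proj i : _ →L[ℝ] ℝ)) := by
        rw [← Finset.sum_add_distrib]
        refine Finset.sum_congr rfl fun i _ => ?_
        simp [evalF, add_smul]
      rw [e1, e2]; exact hp.add hq
  | mul_X p j hp =>
      have e1 : evalF (p * X j) = fun y => evalF p y * (EuclideanSpace.proj (𝕜 := ℝ) j) y := by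
        funext y; simp [evalF]
      rw [e1]
      have key := hp.mul ((EuclideanSpace.proj (𝕜 := ℝ) j).hasFDerivAt (x := x))
      refine HasFDerivAt.congr_fderiv key (Eq.symm ?_)
      ext v
      simp only [ContinuousLinearMap.coe_sum', Finset.sum_apply, ContinuousLinearMap.coe_smul',
        Pi.smul_apply, PiLp.proj_apply, smul_eq_mul, ContinuousLinearMap.add_apply,
        ContinuousLinearMap.coe_smul', ContinuousLinearMap.coe_mk']
      have hterm : ∀ i : Fin n, evalF (pderiv i (p * X j)) x * v i
          = (evalF (pderiv i p) x * x j) * v i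
            + (evalF p x * if i = j then 1 else 0) * v i := by
        intro i
        rw [pderiv_mul, pderiv_X]
        by_cases h : i = j <;> simp [h, evalF, add_mul, Pi.single_apply]
      rw [Finset.sum_congr rfl fun i _ => hterm i, Finset.sum_add_distrib]
      have h2 : ∑ i : Fin n, (evalF p x * if i = j then 1 else 0) * v i
          = evalF p x * v j := by
        rw [Finset.sum_eq_single j] <;> simp +contextual
      rw [h2, Finset.mul_sum, add_comm]
      congr 1
      exact Finset.sum_congr rfl fun i _ => by ring

lemma fderiv_evalF (Q : MvPolynomial (Fin n) ℝ) (x : EuclideanSpace ℝ (Fin n)) (i : Fin n) :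
    fderiv ℝ (evalF Q) x (EuclideanSpace.single i 1) = evalF (pderiv i Q) x := by
  rw [(hasFDerivAt_evalF Q x).fderiv]
  simp only [ContinuousLinearMap.coe_sum', Finset.sum_apply, ContinuousLinearMap.coe_smul',
    Pi.smul_apply, PiLp.proj_apply, EuclideanSpace.single_apply, smul_eq_mul]
  rw [Finset.sum_eq_single i] <;> simp +contextual

lemma laplacian_evalF (Q : MvPolynomial (Fin n) ℝ) (x : EuclideanSpace ℝ (Fin n)) :
    laplacian (evalF Q) x = evalF (lapP Q) x := by
  unfold laplacian lapP
  rw [show evalF (∑ i : Fin n, pderiv i (pderiv i Q)) x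
      = ∑ i : Fin n, evalF (pderiv i (pderiv i Q)) x from by
    simp only [evalF, map_sum]]
  refine Finset.sum_congr rfl fun i _ => ?_
  have h1 : (fun y => fderiv ℝ (evalF Q) y (EuclideanSpace.single i 1))
      = evalF (pderiv i Q) := funext fun y => fderiv_evalF Q y i
  rw [h1, fderiv_evalF]

abbrev En (n : ℕ) := EuclideanSpace ℝ (Fin n)

lemma diffAt_fderiv_apply {s : Set (En n)} (hs : IsOpen s) {f : En n → ℝ}
    (hf : ContDiffOn ℝ 2 f s) {x : En n} (hx : x ∈ s) (v : En n) :
    DifferentiableAt ℝ (fun y => fderiv ℝ f y v) x := by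
  have h1 : ContDiffAt ℝ 2 f x := hf.contDiffAt (hs.mem_nhds hx)
  have h2 : ContDiffAt ℝ 1 (fderiv ℝ f) x := h1.fderiv_right (by norm_num)
  have h3 : DifferentiableAt ℝ (fderiv ℝ f) x := h2.differentiableAt (by norm_num)
  exact (ContinuousLinearMap.apply ℝ ℝ v).differentiableAt.comp x h3

lemma laplacian_add_smul {s : Set (En n)} (hs : IsOpen s)
    {f : En n → ℝ} (hf : ContDiffOn ℝ 2 f s)
    (Q : MvPolynomial (Fin n) ℝ) (c : ℝ) {x : En n} (hx : x ∈ s) :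
    laplacian (fun y => f y + c * evalF Q y) x
      = laplacian f x + c * laplacian (evalF Q) x := by
  have hQd : ∀ y, DifferentiableAt ℝ (evalF Q) y :=
    fun y => ((contDiff_evalF Q (N := 2)).differentiable (by norm_num)).differentiableAt
  have hQ2 : ContDiffOn ℝ 2 (evalF Q) s := (contDiff_evalF Q).contDiffOn
  unfold laplacian
  rw [Finset.mul_sum, ← Finset.sum_add_distrib]
  refine Finset.sum_congr rfl fun i _ => ?_
  set e := EuclideanSpace.single i (1:ℝ)
  have hev : (fun y => fderiv ℝ (fun z => f z + c * evalF Q z) y e)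
      =ᶠ[nhds x] (fun y => fderiv ℝ f y e + c * fderiv ℝ (evalF Q) y e) := by
    filter_upwards [hs.mem_nhds hx] with y hy
    have hfd : DifferentiableAt ℝ f y :=
      (hf.contDiffAt (hs.mem_nhds hy)).differentiableAt (by norm_num)
    have : fderiv ℝ (fun z => f z + c * evalF Q z) y
        = fderiv ℝ f y + c • fderiv ℝ (evalF Q) y := by
      rw [fderiv_fun_add hfd ((hQd y).const_mul c), fderiv_const_mul (hQd y)]
    rw [this]; simp
  rw [hev.fderiv_eq]
  have hA : DifferentiableAt ℝ (fun y => fderiv ℝ f y e) x :=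
    diffAt_fderiv_apply hs hf hx e
  have hB : DifferentiableAt ℝ (fun y => fderiv ℝ (evalF Q) y e) x :=
    diffAt_fderiv_apply hs hQ2 hx e
  have : fderiv ℝ (fun y => fderiv ℝ f y e + c * fderiv ℝ (evalF Q) y e) x
      = fderiv ℝ (fun y => fderiv ℝ f y e) x
        + c • fderiv ℝ (fun y => fderiv ℝ (evalF Q) y e) x := by
    rw [fderiv_fun_add hA (hB.const_mul c), fderiv_const_mul hB]
  rw [this]; simp

lemma second_deriv_test {s : Set (En n)} (hs : IsOpen s) {g : En n → ℝ}
    (hg : ContDiffOn ℝ 2 g s) {x : En n} (hx : x ∈ s)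
    (hmax : IsLocalMax g x) (v : En n) :
    fderiv ℝ (fun y => fderiv ℝ g y v) x v ≤ 0 := by
  by_contra hA'
  push_neg at hA'
  set A := fderiv ℝ (fun y => fderiv ℝ g y v) x v with hAdef
  set ℓ : ℝ → En n := fun t => x + t • v with hℓ
  have hℓ0 : ℓ 0 = x := by simp [hℓ]
  have hℓcont : Continuous ℓ := by fun_prop
  have hline : ∀ t : ℝ, HasDerivAt ℓ v t := by
    intro t
    simpa [hℓ] using ((hasDerivAt_id t).smul_const v).const_add x
  set ψ : ℝ → ℝ := fun t => fderiv ℝ g (ℓ t) v with hψ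
  set φ : ℝ → ℝ := fun t => g (ℓ t) with hφ
  -- φ has derivative ψ on the preimage of s
  have hdiff : ∀ t : ℝ, ℓ t ∈ s → HasDerivAt φ (ψ t) t := by
    intro t ht
    have hgd : DifferentiableAt ℝ g (ℓ t) :=
      (hg.contDiffAt (hs.mem_nhds ht)).differentiableAt (by norm_num)
    exact hgd.hasFDerivAt.comp_hasDerivAt t (hline t)
  -- ψ has derivative A at 0
  have hDψ : HasDerivAt ψ A 0 := by
    have hB : DifferentiableAt ℝ (fun y => fderiv ℝ g y v) x :=
      diffAt_fderiv_apply hs hg hx v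
    have hB' : HasFDerivAt (fun y => fderiv ℝ g y v)
        (fderiv ℝ (fun y => fderiv ℝ g y v) x) (ℓ 0) := by
      rw [hℓ0]; exact hB.hasFDerivAt
    have := hB'.comp_hasDerivAt 0 (hline 0)
    exact this
  have hψ0 : ψ 0 = 0 := by
    simp [hψ, hℓ0, hmax.fderiv_eq_zero]
  -- slope of ψ is eventually positive
  have htend : Filter.Tendsto ℓ (nhds 0) (nhds x) := by
    simpa [ContinuousAt, hℓ0] using hℓcont.continuousAt (x := (0:ℝ))
  have hslope : ∀ᶠ t in nhdsWithin (0:ℝ) {(0:ℝ)}ᶜ, 0 < (ψ t - ψ 0) / (t - 0) := by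
    have h1 := hasDerivAt_iff_tendsto_slope.mp hDψ
    have h2 := h1.eventually (eventually_gt_nhds hA')
    filter_upwards [h2] with t ht
    rwa [slope_def_field] at ht
  have hsmem : ∀ᶠ t in nhdsWithin (0:ℝ) {(0:ℝ)}ᶜ, ℓ t ∈ s := by
    apply eventually_nhdsWithin_of_eventually_nhds
    exact htend.eventually (hs.mem_nhds hx)
  have hφmax : ∀ᶠ t in nhdsWithin (0:ℝ) {(0:ℝ)}ᶜ, φ t ≤ φ 0 := by
    apply eventually_nhdsWithin_of_eventually_nhds
    have hmx : ∀ᶠ y in nhds x, g y ≤ g x := hmax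
    filter_upwards [htend.eventually hmx] with t ht
    simpa [hφ, hℓ0] using ht
  obtain ⟨δ, hδpos, hδ⟩ := Metric.mem_nhdsWithin_iff.mp ((hslope.and hsmem).and hφmax)
  have hmem : ∀ t : ℝ, 0 < t → t < δ →
      (0 < (ψ t - ψ 0) / (t - 0) ∧ ℓ t ∈ s) ∧ φ t ≤ φ 0 := by
    intro t ht0 htδ
    apply hδ
    constructor
    · simp [Real.dist_eq, abs_of_pos ht0, htδ]
    · simp [ne_of_gt ht0]
  set t₀ := δ / 2 with ht₀
  have ht₀pos : 0 < t₀ := by positivity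
  have ht₀δ : t₀ < δ := by simp [ht₀]; linarith
  -- MVT on [0, t₀]
  have hsub : ∀ t ∈ Set.Icc (0:ℝ) t₀, ℓ t ∈ s := by
    intro t ⟨h1, h2⟩
    rcases eq_or_lt_of_le h1 with h | h
    · rw [← h, hℓ0]; exact hx
    · exact ((hmem t h (lt_of_le_of_lt h2 ht₀δ)).1).2
  have hcont : ContinuousOn φ (Set.Icc 0 t₀) :=
    fun t ht => ((hdiff t (hsub t ht)).continuousAt).continuousWithinAt
  have hder : ∀ t ∈ Set.Ioo (0:ℝ) t₀, HasDerivAt φ (ψ t) t :=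
    fun t ht => hdiff t (hsub t ⟨le_of_lt ht.1, le_of_lt ht.2⟩)
  obtain ⟨c, hc, hceq⟩ := exists_hasDerivAt_eq_slope φ ψ ht₀pos hcont hder
  have hc1 := (hmem c hc.1 (lt_trans hc.2 ht₀δ)).1.1
  rw [hψ0, sub_zero, sub_zero] at hc1
  have hψcpos : 0 < ψ c := by
    have := mul_pos hc1 hc.1
    rwa [div_mul_cancel₀ _ (ne_of_gt hc.1)] at this
  have hφt₀ := (hmem t₀ ht₀pos ht₀δ).2
  rw [hceq] at hψcpos
  have : (φ t₀ - φ 0) / (t₀ - 0) ≤ 0 := by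
    apply div_nonpos_of_nonpos_of_nonneg <;> [linarith; linarith]
  linarith

lemma evalF_rsq (x : En n) : evalF (rsq n) x = ‖x‖ ^ 2 := by
  rw [EuclideanSpace.norm_eq, Real.sq_sqrt (by positivity)]
  simp [evalF, rsq]

lemma pderiv_rsq (i : Fin n) : pderiv i (rsq n) = 2 * X i := by
  unfold rsq
  rw [map_sum, Finset.sum_eq_single i]
  · rw [pderiv_pow, pderiv_X_self]; ring
  · intro j _ hji
    rw [pderiv_pow, pderiv_X_of_ne hji]; ring
  · simp

lemma evalF_lapP_rsq_sub_one (x : En n) : evalF (lapP (rsq n - 1)) x = 2 * n := by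
  have h : lapP (rsq n - 1) = ∑ _i : Fin n, (2 : MvPolynomial (Fin n) ℝ) := by
    unfold lapP
    refine Finset.sum_congr rfl fun i _ => ?_
    rw [map_sub, pderiv_one, sub_zero, pderiv_rsq,
      show (2 : MvPolynomial (Fin n) ℝ) * X i = C 2 * X i by rw [map_ofNat],
      pderiv_C_mul, pderiv_X_self, mul_one, map_ofNat]
  rw [h]
  simp [evalF, mul_comm]

lemma max_principle (hn : 0 < n) {w : En n → ℝ}
    (hc : ContinuousOn w (closedBall 0 1)) (hsm : ContDiffOn ℝ 2 w (ball 0 1))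
    (hl : ∀ x ∈ ball (0:En n) 1, laplacian w x = 0)
    (hb : ∀ x : En n, ‖x‖ = 1 → w x = 0) :
    ∀ x ∈ closedBall (0:En n) 1, w x ≤ 0 := by
  suffices hε : ∀ ε > (0:ℝ), ∀ x ∈ closedBall (0:En n) 1, w x ≤ ε by
    intro x hx
    by_contra h
    push_neg at h
    have := hε (w x / 2) (by linarith) x hx
    linarith
  intro ε hε
  set p : MvPolynomial (Fin n) ℝ := rsq n - 1 with hp
  have hpev : ∀ y : En n, evalF p y = ‖y‖ ^ 2 - 1 := by
    intro y; rw [hp]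
    show MvPolynomial.eval _ (rsq n - 1) = _
    rw [map_sub, map_one]
    have := evalF_rsq y
    rw [show MvPolynomial.eval (fun i => y i) (rsq n) = evalF (rsq n) y from rfl, this]
  set g : En n → ℝ := fun y => w y + ε * evalF p y with hg
  have hgc : ContinuousOn g (closedBall 0 1) :=
    hc.add ((continuous_const.mul (contDiff_evalF p (N := 2)).continuous).continuousOn)
  obtain ⟨x₀, hx₀, hmax⟩ := (isCompact_closedBall (0:En n) 1).exists_isMaxOn
    ⟨0, mem_closedBall_self (by norm_num)⟩ hgc
  have hx₀le : ‖x₀‖ ≤ 1 := mem_closedBall_zero_iff.mp hx₀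
  have hgx₀ : g x₀ ≤ 0 := by
    rcases eq_or_lt_of_le hx₀le with h1 | h1
    · rw [hg]; simp only
      rw [hb x₀ h1, hpev, h1]
      ring_nf
      exact le_refl 0
    · exfalso
      have hx₀b : x₀ ∈ ball (0:En n) 1 := mem_ball_zero_iff.mpr h1
      have hloc : IsLocalMax g x₀ :=
        hmax.isLocalMax (Filter.mem_of_superset (isOpen_ball.mem_nhds hx₀b)
          ball_subset_closedBall)
      have hgsm : ContDiffOn ℝ 2 g (ball 0 1) :=
        hsm.add ((contDiff_const.mul (contDiff_evalF p)).contDiffOn)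
      have h2 : laplacian g x₀ ≤ 0 := by
        unfold laplacian
        apply Finset.sum_nonpos
        intro i _
        exact second_deriv_test isOpen_ball hgsm hx₀b hloc _
      have h3 : laplacian g x₀ = laplacian w x₀ + ε * laplacian (evalF p) x₀ :=
        laplacian_add_smul isOpen_ball hsm p ε hx₀b
      rw [hl x₀ hx₀b, laplacian_evalF, hp, evalF_lapP_rsq_sub_one] at h3
      have hn' : (0:ℝ) < 2 * n := by
        have : (1:ℝ) ≤ n := by exact_mod_cast hn
        linarith
      nlinarith
  intro x hx
  have h4 : g x ≤ g x₀ := hmax hx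
  have h5 : w x = g x - ε * (‖x‖ ^ 2 - 1) := by rw [hg]; simp [hpev]
  have h6 : ‖x‖ ≤ 1 := mem_closedBall_zero_iff.mp hx
  have h7 : 0 ≤ ‖x‖ := norm_nonneg x
  nlinarith

lemma laplacian_neg (w : En n → ℝ) (x : En n) :
    laplacian (fun y => -(w y)) x = - laplacian w x := by
  unfold laplacian
  rw [← Finset.sum_neg_distrib]
  refine Finset.sum_congr rfl fun i _ => ?_
  have h1 : (fun y => fderiv ℝ (fun z => -(w z)) y (EuclideanSpace.single i 1))
      = fun y => -(fderiv ℝ w y (EuclideanSpace.single i 1)) := by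
    funext y; rw [fderiv_fun_neg]; simp
  rw [h1, fderiv_fun_neg]; simp

lemma eval_aeval_line (z : Fin n → ℝ) (Q : MvPolynomial (Fin n) ℝ) (t : ℝ) :
    Polynomial.eval t (MvPolynomial.aeval (fun i => Polynomial.C (z i) * Polynomial.X) Q)
      = MvPolynomial.eval (fun i => z i * t) Q := by
  induction Q using MvPolynomial.induction_on with
  | C a => simp
  | add p q hp hq => simp [hp, hq]
  | mul_X p j hp => simp [hp]

lemma eq_zero_of_evalF_zero_ball {Q : MvPolynomial (Fin n) ℝ}
    (h : ∀ x ∈ ball (0:En n) 1, evalF Q x = 0) : Q = 0 := by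
  apply MvPolynomial.funext
  intro z
  rw [map_zero]
  set zE : En n := (WithLp.equiv 2 (Fin n → ℝ)).symm z with hzE
  have hzi : ∀ i, zE i = z i := fun i => rfl
  set pl : Polynomial ℝ := MvPolynomial.aeval (fun i => Polynomial.C (z i) * Polynomial.X) Q
    with hpl
  have key : ∀ t : ℝ, Polynomial.eval t pl = MvPolynomial.eval (fun i => z i * t) Q :=
    fun t => eval_aeval_line z Q t
  set δ : ℝ := 1 / (‖zE‖ + 1) with hδ
  have hδpos : 0 < δ := by positivity
  have hroots : Set.Ioo (0:ℝ) δ ⊆ {t | Polynomial.IsRoot pl t} := by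
    intro t ⟨ht0, htδ⟩
    have hkey1 : t * (‖zE‖ + 1) < 1 := by
      have h1 : (0:ℝ) < ‖zE‖ + 1 := by positivity
      have h2 := mul_lt_mul_of_pos_right htδ h1
      rwa [hδ, one_div, inv_mul_cancel₀ (ne_of_gt h1)] at h2
    have hmem : t • zE ∈ ball (0:En n) 1 := by
      rw [mem_ball_zero_iff, norm_smul, Real.norm_eq_abs, abs_of_pos ht0]
      nlinarith [norm_nonneg zE]
    have hz := h (t • zE) hmem
    show Polynomial.eval t pl = 0
    rw [key t]
    rw [evalF] at hz
    have harg : (fun i => z i * t) = fun i => (t • zE) i := by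
      funext i
      show z i * t = (t • zE) i
      rw [PiLp.smul_apply, hzi, smul_eq_mul, mul_comm]
    rw [harg]
    exact hz
  have hplz : pl = 0 :=
    pl.eq_zero_of_infinite_isRoot ((Set.Ioo_infinite hδpos).mono hroots)
  have hk := key 1
  rw [hplz] at hk
  simpa using hk.symm

lemma td_pderiv {p : MvPolynomial (Fin n) ℝ} (i : Fin n) {d : ℕ}
    (h : p.totalDegree ≤ d + 1) : (pderiv i p).totalDegree ≤ d := by
  have hrw : pderiv i p = ∑ m ∈ p.support, pderiv i (monomial m (coeff m p)) := by
    conv_lhs => rw [p.as_sum]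
    rw [map_sum]
  rw [hrw]
  refine le_trans (totalDegree_finset_sum _ _) ?_
  apply Finset.sup_le
  intro m hm
  by_cases hmi : m i = 0
  · rw [pderiv_monomial]
    simp [hmi]
  · rw [pderiv_monomial]
    refine le_trans (totalDegree_monomial_le _ _) ?_
    simp only [Function.id_def]
    have hle : Finsupp.single i 1 ≤ m :=
      Finsupp.single_le_iff.mpr (Nat.one_le_iff_ne_zero.mpr hmi)
    have h2 : (m - Finsupp.single i 1) + Finsupp.single i 1 = m := tsub_add_cancel_of_le hle
    have hsum : (m.sum fun _ e => e)
        = ((m - Finsupp.single i 1).sum fun _ e => e) + 1 := by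
      conv_lhs => rw [← h2]
      rw [Finsupp.sum_add_index' (fun _ => rfl) (fun _ _ _ => rfl),
        Finsupp.sum_single_index rfl]
    have hms : (m.sum fun _ e => e) ≤ d + 1 := le_trans (le_totalDegree hm) h
    omega

lemma td_rsq_sub : ((1 : MvPolynomial (Fin n) ℝ) - rsq n).totalDegree ≤ 2 := by
  rw [sub_eq_add_neg]
  refine le_trans (totalDegree_add _ _) (max_le (by simp [totalDegree_one]) ?_)
  rw [totalDegree_neg]
  unfold rsq
  refine le_trans (totalDegree_finset_sum _ _) (Finset.sup_le fun i _ => ?_)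
  refine le_trans (totalDegree_pow _ _) ?_
  simp [totalDegree_X]

lemma td_T {Q : MvPolynomial (Fin n) ℝ} {d : ℕ} (h : Q.totalDegree ≤ d) :
    (lapP ((1 - rsq n) * Q)).totalDegree ≤ d := by
  have h1 : ((1 - rsq n) * Q).totalDegree ≤ d + 2 := by
    refine le_trans (totalDegree_mul _ _) ?_
    have := td_rsq_sub (n := n)
    omega
  unfold lapP
  refine le_trans (totalDegree_finset_sum _ _) (Finset.sup_le fun i _ => ?_)
  exact td_pderiv i (td_pderiv i (by omega))

lemma lapP_injective (hn : 0 < n) {Q : MvPolynomial (Fin n) ℝ}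
    (h : lapP ((1 - rsq n) * Q) = 0) : Q = 0 := by
  set P : MvPolynomial (Fin n) ℝ := (1 - rsq n) * Q with hP
  have hbd : ∀ x : En n, ‖x‖ = 1 → evalF P x = 0 := by
    intro x hx
    rw [hP, evalF, map_mul, map_sub, map_one,
      show MvPolynomial.eval (fun i => x i) (rsq n) = evalF (rsq n) x from rfl,
      evalF_rsq, hx]
    ring
  have hlap : ∀ x ∈ ball (0:En n) 1, laplacian (evalF P) x = 0 := by
    intro x _
    rw [laplacian_evalF, h]
    simp [evalF]
  have hlapneg : ∀ x ∈ ball (0:En n) 1, laplacian (evalF (-P)) x = 0 := by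
    intro x _
    rw [laplacian_evalF]
    have : lapP (-P) = 0 := by
      unfold lapP at h ⊢
      rw [← neg_eq_zero, ← Finset.sum_neg_distrib] at h
      rw [← h]
      refine Finset.sum_congr rfl fun i _ => ?_
      rw [map_neg, map_neg]
    rw [this]
    simp [evalF]
  have h1 := max_principle hn ((contDiff_evalF P (N := 2)).continuous.continuousOn)
    (contDiff_evalF P).contDiffOn hlap hbd
  have h2 := max_principle hn ((contDiff_evalF (-P) (N := 2)).continuous.continuousOn)
    (contDiff_evalF (-P)).contDiffOn hlapneg
    (by intro x hx; rw [show evalF (-P) x = -evalF P x from by simp [evalF], hbd x hx]; ring)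
  have hzero : ∀ x ∈ ball (0:En n) 1, evalF Q x = 0 := by
    intro x hx
    have hx' : x ∈ closedBall (0:En n) 1 := ball_subset_closedBall hx
    have e1 := h1 x hx'
    have e2 := h2 x hx'
    rw [show evalF (-P) x = -evalF P x from by simp [evalF]] at e2
    have e3 : evalF P x = 0 := le_antisymm e1 (by linarith)
    rw [hP, evalF, map_mul, map_sub, map_one,
      show MvPolynomial.eval (fun i => x i) (rsq n) = evalF (rsq n) x from rfl,
      evalF_rsq] at e3
    have hxn : ‖x‖ < 1 := mem_ball_zero_iff.mp hx
    have hne : 1 - ‖x‖ ^ 2 ≠ 0 := by nlinarith [norm_nonneg x]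
    rcases mul_eq_zero.mp e3 with h4 | h4
    · exact absurd h4 hne
    · exact h4
  exact eq_zero_of_evalF_zero_ball hzero

lemma exists_poly_solution (hn : 0 < n) (v : MvPolynomial (Fin n) ℝ) :
    ∃ Q : MvPolynomial (Fin n) ℝ, Q.totalDegree ≤ v.totalDegree ∧
      lapP ((1 - rsq n) * Q) = v := by
  classical
  set d := v.totalDegree with hd
  set S := MvPolynomial.restrictTotalDegree (Fin n) ℝ d with hS
  set T : MvPolynomial (Fin n) ℝ →ₗ[ℝ] MvPolynomial (Fin n) ℝ :=
    (∑ i : Fin n, ((pderiv i : Derivation ℝ (MvPolynomial (Fin n) ℝ) _).toLinearMap.comp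
      (pderiv i : Derivation ℝ (MvPolynomial (Fin n) ℝ) _).toLinearMap)).comp
      (LinearMap.mulLeft ℝ (1 - rsq n)) with hT
  have hTQ : ∀ Q, T Q = lapP ((1 - rsq n) * Q) := by
    intro Q
    rw [hT]
    simp only [LinearMap.comp_apply, LinearMap.mulLeft_apply, LinearMap.sum_apply,
      LinearMap.coe_comp, Function.comp_apply]
    rfl
  have hmaps : ∀ x ∈ S, T x ∈ S := by
    intro x hx
    rw [hS, MvPolynomial.mem_restrictTotalDegree] at hx ⊢
    rw [hTQ]
    exact td_T hx
  set Tr : S →ₗ[ℝ] S := T.restrict hmaps with hTr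
  have hinj : Function.Injective Tr := by
    intro a b hab
    have h1 : T a.val = T b.val := congrArg Subtype.val hab
    rw [hTQ, hTQ] at h1
    have h2 : lapP ((1 - rsq n) * (a.val - b.val)) = 0 := by
      rw [mul_sub]
      have : lapP ((1 - rsq n) * a.val - (1 - rsq n) * b.val)
          = lapP ((1 - rsq n) * a.val) - lapP ((1 - rsq n) * b.val) := by
        unfold lapP
        rw [← Finset.sum_sub_distrib]
        refine Finset.sum_congr rfl fun i _ => ?_
        rw [map_sub, map_sub]
      rw [this, h1, sub_self]
    have := lapP_injective hn h2
    exact Subtype.ext (sub_eq_zero.mp this)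
  have hsurj : Function.Surjective Tr := LinearMap.injective_iff_surjective.mp hinj
  have hvS : v ∈ S := by
    rw [hS, MvPolynomial.mem_restrictTotalDegree]
  obtain ⟨Q, hQ⟩ := hsurj ⟨v, hvS⟩
  refine ⟨Q.val, ?_, ?_⟩
  · exact (MvPolynomial.mem_restrictTotalDegree _ _ _).mp Q.property
  · have hv1 := congrArg Subtype.val hQ
    have hv2 : T Q.val = v := hv1
    rw [hTQ] at hv2
    exact hv2


/-- If `v` is a polynomial, the solution of the Dirichlet problem `Δu = v` in the open unit
ball, `u = 0` on the unit sphere, is a polynomial of degree at most `deg v + 2`. -/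
theorem dirichlet_solution_polynomial {n : ℕ} (v : MvPolynomial (Fin n) ℝ)
    (u : EuclideanSpace ℝ (Fin n) → ℝ)
    (hu_cont : ContinuousOn u (Metric.closedBall 0 1))
    (hu_smooth : ContDiffOn ℝ 2 u (Metric.ball 0 1))
    (hu_eq : ∀ x ∈ Metric.ball (0 : EuclideanSpace ℝ (Fin n)) 1,
      laplacian u x = MvPolynomial.eval (fun i => x i) v)
    (hu_bd : ∀ x : EuclideanSpace ℝ (Fin n), ‖x‖ = 1 → u x = 0) :
    ∃ P : MvPolynomial (Fin n) ℝ, P.totalDegree ≤ v.totalDegree + 2 ∧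
      ∀ x ∈ Metric.closedBall (0 : EuclideanSpace ℝ (Fin n)) 1,
        u x = MvPolynomial.eval (fun i => x i) P := by
  rcases Nat.eq_zero_or_pos n with hn | hn
  · subst hn
    refine ⟨C (u 0), by simp [totalDegree_C], ?_⟩
    intro x _
    have hx0 : x = 0 := PiLp.ext fun i => i.elim0
    rw [hx0]
    simp
  · obtain ⟨Q, hQd, hQ⟩ := exists_poly_solution hn v
    set P := (1 - rsq n) * Q with hPdef
    have hPd : P.totalDegree ≤ v.totalDegree + 2 := by
      refine le_trans (totalDegree_mul _ _) ?_
      have := td_rsq_sub (n := n)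
      omega
    refine ⟨P, hPd, ?_⟩
    set w : En n → ℝ := fun y => u y + (-1) * evalF P y with hw
    have hPc2 : ContDiff ℝ 2 (evalF P) := contDiff_evalF P
    have hwc : ContinuousOn w (closedBall 0 1) :=
      hu_cont.add ((continuous_const.mul hPc2.continuous).continuousOn)
    have hwsm : ContDiffOn ℝ 2 w (ball 0 1) :=
      hu_smooth.add ((contDiff_const.mul hPc2).contDiffOn)
    have hbP : ∀ x : En n, ‖x‖ = 1 → evalF P x = 0 := by
      intro x hx
      rw [hPdef, evalF, map_mul, map_sub, map_one,
        show MvPolynomial.eval (fun i => x i) (rsq n) = evalF (rsq n) x from rfl,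
        evalF_rsq, hx]
      ring
    have hwl : ∀ x ∈ ball (0:En n) 1, laplacian w x = 0 := by
      intro x hx
      rw [hw, laplacian_add_smul isOpen_ball hu_smooth P (-1) hx, hu_eq x hx,
        laplacian_evalF, hPdef, hQ]
      show MvPolynomial.eval (fun i => x i) v + -1 * MvPolynomial.eval (fun i => x i) v = 0
      ring
    have hwb : ∀ x : En n, ‖x‖ = 1 → w x = 0 := by
      intro x hx
      rw [hw]
      show u x + -1 * evalF P x = 0
      rw [hu_bd x hx, hbP x hx]
      ring
    have h1 := max_principle hn hwc hwsm hwl hwb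
    have h2 := max_principle hn hwc.neg hwsm.neg
      (fun x hx => by show laplacian (fun y => -(w y)) x = 0; rw [
        laplacian_neg, hwl x hx]; ring)
      (fun x hx => by show -(w x) = 0; rw [hwb x hx]; ring)
    intro x hx
    have e1 := h1 x hx
    have e2 : -(w x) ≤ 0 := h2 x hx
    have e3 : w x = 0 := le_antisymm e1 (by linarith)
    have e4 : u x + (-1) * evalF P x = 0 := e3
    have e5 : evalF P x = MvPolynomial.eval (fun i => x i) P := rfl
    linarith
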